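/- If the list (3+t, 3−t, −2, −2, −2) with 0 < t is the spectrum of a 5×5 real symmetric entrywise nonnegative matrix, then t ≥ 1. -/

import Mathlib

open Polynomial Matrix

lemma my_cross_nonneg (a b a' b' : ℝ) (ha : 0 ≤ a) (ha' : 0 ≤ a')
    (h1 : a^2 + b^2 = 1) (h2 : a'^2 + b'^2 = 1) (hbb : b ≤ b') : 0 ≤ a * b' - b * a' := by
  rcases le_or_gt 0 b with hb | hb
  · have hb' : 0 ≤ b' := le_trans hb hbb
    have : (b*a')^2 ≤ (a*b')^2 := by nlinarith
    have h3 : 0 ≤ a * b' := mul_nonneg ha hb'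
    have h4 : 0 ≤ b * a' := mul_nonneg hb ha'
    nlinarith
  · rcases le_or_gt 0 b' with hb' | hb'
    · have : 0 ≤ a * b' := mul_nonneg ha hb'
      have : b * a' ≤ 0 := mul_nonpos_of_nonpos_of_nonneg hb.le ha'
      linarith
    · have : (a*b')^2 ≤ (b*a')^2 := by nlinarith
      have h3 : a * b' ≤ 0 := mul_nonpos_of_nonneg_of_nonpos ha hb'.le
      have h4 : b * a' ≤ 0 := mul_nonpos_of_nonpos_of_nonneg hb.le ha'
      nlinarith

lemma my_key (X Y A B : ℝ) (hA : 0 ≤ A) (hB : 0 ≤ B) (hD : 0 ≤ A*Y + X*B)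
    (hA2 : A^2 = 1 - X^2) (hB2 : B^2 = 1 - Y^2) (hexcl : ¬(X = -1 ∧ Y = -1)) :
    0 ≤ X + Y := by
  rcases le_or_gt 0 X with hX0 | hX0 <;> rcases le_or_gt 0 Y with hY0 | hY0
  · linarith
  · have h1 : 0 ≤ X*B - A*Y := by nlinarith [mul_nonneg hX0 hB, mul_nonneg hA (neg_nonneg.2 hY0.le)]
    have h2 : 0 ≤ X*B + A*Y := by linarith
    nlinarith [mul_nonneg h1 h2]
  · have h1 : 0 ≤ A*Y - X*B := by nlinarith [mul_nonneg hA hY0, mul_nonneg (neg_nonneg.2 hX0.le) hB]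
    nlinarith [mul_nonneg h1 hD]
  · exfalso
    have hAY : A*Y ≤ 0 := mul_nonpos_of_nonneg_of_nonpos hA hY0.le
    have hXB : X*B ≤ 0 := mul_nonpos_of_nonpos_of_nonneg hX0.le hB
    have hAY0 : A*Y = 0 := by linarith
    have hXB0 : X*B = 0 := by linarith
    have hA0 : A = 0 := by
      rcases mul_eq_zero.1 hAY0 with h | h
      · exact h
      · exact absurd h (ne_of_lt hY0)
    have hB0 : B = 0 := by
      rcases mul_eq_zero.1 hXB0 with h | h
      · exact absurd h (ne_of_lt hX0)
      · exact h
    exact hexcl ⟨by nlinarith, by nlinarith⟩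

lemma my_pair (p x c s q y : ℝ) (hp : 0 ≤ p) (hc : 0 ≤ c) (hq : 0 ≤ q)
    (hu : p^2 + x^2 = 1) (hv : c^2 + s^2 = 1) (hw : q^2 + y^2 = 1)
    (hxs : x ≤ s) (hsy : s ≤ y) : 0 ≤ (p*c + x*s) + (q*c + y*s) := by
  have hA : 0 ≤ p * s - x * c := my_cross_nonneg p x c s hp hc hu hv hxs
  have hB : 0 ≤ c * y - s * q := my_cross_nonneg c s q y hc hq hv hw hsy
  have hD : 0 ≤ p * y - x * q := my_cross_nonneg p x q y hp hq hu hw (le_trans hxs hsy)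
  have hid : (p*s - x*c)*(q*c + y*s) + (p*c + x*s)*(c*y - s*q) = p*y - x*q := by
    linear_combination (p*y - x*q) * hv
  apply my_key (p*c + x*s) (q*c + y*s) (p*s - x*c) (c*y - s*q) hA hB
  · rw [hid]; exact hD
  · nlinarith [hu, hv]
  · nlinarith [hv, hw]
  · rintro ⟨hX1, hY1⟩
    have hpc : 0 ≤ p*c := mul_nonneg hp hc
    have hxs1 : x*s ≤ -1 := by linarith
    have hs1 : s = 1 := by nlinarith [sq_nonneg (x+s), sq_nonneg p, sq_nonneg c, sq_nonneg (s-1), sq_nonneg (s+1)]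
    have hy1 : y = 1 := by nlinarith [sq_nonneg q]
    have : 0 ≤ q*c + y*s := by rw [hy1, hs1]; positivity
    linarith

lemma my_exists_min {α : Type*} [DecidableEq α] (r : α → α → Prop) (htot : ∀ a b, r a b ∨ r b a)
    (htrans : ∀ a b c, r a b → r b c → r a c) (s : Finset α) (hs : s.Nonempty) :
    ∃ k ∈ s, ∀ i ∈ s, r k i := by
  induction s using Finset.induction_on with
  | empty => exact absurd hs (by simp)
  | @insert a s' ha ih =>
    rcases s'.eq_empty_or_nonempty with h0 | h1
    · subst h0
      exact ⟨a, by simp, by simpa using (htot a a).elim id id⟩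
    · obtain ⟨k, hk, hmin⟩ := ih h1
      rcases htot k a with h | h
      · refine ⟨k, by simp [hk], ?_⟩
        intro i hi
        rcases Finset.mem_insert.1 hi with rfl | hi
        · exact h
        · exact hmin i hi
      · refine ⟨a, by simp, ?_⟩
        intro i hi
        rcases Finset.mem_insert.1 hi with rfl | hi
        · exact (htot i i).elim id id
        · exact htrans a k i h (hmin i hi)

lemma my_halfplane (a b : Fin 5 → ℝ) (ha : ∀ i, 0 ≤ a i)
    (hub : ∀ i, (a i)^2 + (b i)^2 = 1) :
    1 ≤ (∑ i, a i)^2 + (∑ i, b i)^2 := by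
  obtain ⟨σ, hmono⟩ : ∃ σ : Equiv.Perm (Fin 5), Monotone (b ∘ σ) :=
    ⟨Tuple.sort b, Tuple.monotone_sort b⟩
  set a' : Fin 5 → ℝ := a ∘ σ with ha'def
  set b' : Fin 5 → ℝ := b ∘ σ with hb'def
  have hsa : ∑ i, a' i = ∑ i, a i := Equiv.sum_comp σ a
  have hsb : ∑ i, b' i = ∑ i, b i := Equiv.sum_comp σ b
  have ha' : ∀ i, 0 ≤ a' i := fun i => ha _
  have hub' : ∀ i, (a' i)^2 + (b' i)^2 = 1 := fun i => hub _
  have h04 : 0 ≤ (a' 0 * a' 2 + b' 0 * b' 2) + (a' 4 * a' 2 + b' 4 * b' 2) :=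
    my_pair (a' 0) (b' 0) (a' 2) (b' 2) (a' 4) (b' 4) (ha' 0) (ha' 2) (ha' 4)
      (hub' 0) (hub' 2) (hub' 4) (hmono (show (0:Fin 5) ≤ 2 by decide))
      (hmono (show (2:Fin 5) ≤ 4 by decide))
  have h13 : 0 ≤ (a' 1 * a' 2 + b' 1 * b' 2) + (a' 3 * a' 2 + b' 3 * b' 2) :=
    my_pair (a' 1) (b' 1) (a' 2) (b' 2) (a' 3) (b' 3) (ha' 1) (ha' 2) (ha' 3)
      (hub' 1) (hub' 2) (hub' 3) (hmono (show (1:Fin 5) ≤ 2 by decide))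
      (hmono (show (2:Fin 5) ≤ 3 by decide))
  have hexp : (∑ i, a' i) * a' 2 + (∑ i, b' i) * b' 2
      = ((a' 2)^2 + (b' 2)^2) + ((a' 0 * a' 2 + b' 0 * b' 2) + (a' 4 * a' 2 + b' 4 * b' 2))
        + ((a' 1 * a' 2 + b' 1 * b' 2) + (a' 3 * a' 2 + b' 3 * b' 2)) := by
    rw [Fin.sum_univ_five, Fin.sum_univ_five]; ring
  have hdot : 1 ≤ (∑ i, a' i) * a' 2 + (∑ i, b' i) * b' 2 := by
    rw [hexp, hub' 2]; linarith
  have hCS : ((∑ i, a' i) * a' 2 + (∑ i, b' i) * b' 2)^2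
      ≤ (∑ i, a' i)^2 + (∑ i, b' i)^2 := by
    nlinarith [sq_nonneg ((∑ i, a' i) * b' 2 - (∑ i, b' i) * a' 2), hub' 2]
  rw [← hsa, ← hsb]
  nlinarith [hdot, hCS]

lemma my_core (x y : Fin 5 → ℝ) (h2 : ∀ i, (x i)^2 + (y i)^2 = 2)
    (hdot : ∀ i j, 0 ≤ x i * x j + y i * y j) :
    4 ≤ (∑ i, ((x i)^2 - (y i)^2))^2 + (∑ i, 2 * x i * y i)^2 := by
  -- find k with minimal angle: cross (v k) (v i) ≥ 0 for all i
  obtain ⟨k, -, hk⟩ := my_exists_min (fun i j : Fin 5 => 0 ≤ x i * y j - y i * x j)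
    (fun i j => by rcases le_total 0 (x i * y j - y i * x j) with h | h
                   · exact Or.inl h
                   · exact Or.inr (by nlinarith))
    (fun i j l hij hjl => by
      have hd := hdot j l
      have hd' := hdot i j
      have hid : 2 * (x i * y l - y i * x l)
          = (x i * y j - y i * x j) * (x j * x l + y j * y l)
            + (x i * x j + y i * y j) * (x j * y l - y j * x l) := by
        linear_combination (y i * x l - x i * y l) * (h2 j)
      nlinarith [mul_nonneg hij hd, mul_nonneg hd' hjl])
    Finset.univ ⟨0, Finset.mem_univ 0⟩
  set w1 : Fin 5 → ℝ := fun i => (x i)^2 - (y i)^2 with hw1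
  set w2 : Fin 5 → ℝ := fun i => 2 * x i * y i with hw2
  have hnorm : ∀ i, (w1 i)^2 + (w2 i)^2 = 4 := by
    intro i
    have := h2 i
    simp only [hw1, hw2]
    nlinarith
  set a : Fin 5 → ℝ := fun i => (w1 k * w2 i - w2 k * w1 i)/4 with hadef
  set b : Fin 5 → ℝ := fun i => (w1 k * w1 i + w2 k * w2 i)/4 with hbdef
  have ha : ∀ i, 0 ≤ a i := by
    intro i
    have hcross : w1 k * w2 i - w2 k * w1 i
        = 2 * (x k * y i - y k * x i) * (x k * x i + y k * y i) := by
      simp only [hw1, hw2]; ring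
    have h1 := hk i (Finset.mem_univ i)
    have h3 := hdot k i
    simp only [hadef, hcross]
    positivity
  have hub : ∀ i, (a i)^2 + (b i)^2 = 1 := by
    intro i
    have h1 := hnorm i
    have h2k := hnorm k
    have : (a i)^2 + (b i)^2 = ((w1 k)^2 + (w2 k)^2) * ((w1 i)^2 + (w2 i)^2) / 16 := by
      simp only [hadef, hbdef]; ring
    rw [this, h1, h2k]; norm_num
  have hhp := my_halfplane a b ha hub
  have hsa : ∑ i, a i = (w1 k * (∑ i, w2 i) - w2 k * (∑ i, w1 i))/4 := by
    rw [Finset.mul_sum, Finset.mul_sum, ← Finset.sum_sub_distrib, ← Finset.sum_div]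
  have hsb : ∑ i, b i = (w1 k * (∑ i, w1 i) + w2 k * (∑ i, w2 i))/4 := by
    rw [Finset.mul_sum, Finset.mul_sum, ← Finset.sum_add_distrib, ← Finset.sum_div]
  rw [hsa, hsb] at hhp
  have hE : ((w1 k * (∑ i, w2 i) - w2 k * (∑ i, w1 i))/4)^2
      + ((w1 k * (∑ i, w1 i) + w2 k * (∑ i, w2 i))/4)^2
      = ((w1 k)^2 + (w2 k)^2) * ((∑ i, w1 i)^2 + (∑ i, w2 i)^2) / 16 := by ring
  rw [hE, hnorm k] at hhp
  have hg1 : ∑ i, w1 i = ∑ i, ((x i)^2 - (y i)^2) := rfl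
  have hg2 : ∑ i, w2 i = ∑ i, 2 * x i * y i := rfl
  rw [hg1, hg2] at hhp
  linarith

lemma my_charpoly_conj {n : Type*} [Fintype n] [DecidableEq n]
    (A D U : Matrix n n ℝ) (hU : star U * U = 1)
    (h : star U * A * U = D) : A.charpoly = D.charpoly := by
  classical
  have hch : charmatrix D = (star U).map C * charmatrix A * U.map C := by
    rw [← h]
    unfold charmatrix
    simp only [RingHom.mapMatrix_apply]
    rw [Matrix.mul_sub, Matrix.sub_mul, ← Matrix.map_mul, ← Matrix.map_mul]
    congr 1
    rw [← (scalar_commute (X : ℝ[X]) (fun r' => Commute.all _ _) ((star U).map C)).eq,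
      Matrix.mul_assoc, ← Matrix.map_mul, hU]
    simp
  have h1 : ((star U).map C).det * (U.map C).det = 1 := by
    rw [← Matrix.det_mul, ← Matrix.map_mul, hU]
    simp
  have hdet := congrArg Matrix.det hch
  rw [Matrix.det_mul, Matrix.det_mul] at hdet
  rw [Matrix.charpoly, Matrix.charpoly, hdet]
  linear_combination (-(charmatrix A).det) * h1

lemma my_charpoly_diagonal {n : Type*} [Fintype n] [DecidableEq n] (d : n → ℝ) :
    (Matrix.diagonal d).charpoly = ∏ i, (X - C (d i)) := by
  rw [Matrix.charpoly]
  have : charmatrix (Matrix.diagonal d) = Matrix.diagonal (fun i => (X:ℝ[X]) - C (d i)) := by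
    apply Matrix.ext
    intro i j
    by_cases hij : i = j
    · subst hij; rw [charmatrix_apply_eq, Matrix.diagonal_apply_eq, Matrix.diagonal_apply_eq]
    · rw [charmatrix_apply_ne _ _ _ hij, Matrix.diagonal_apply_ne _ hij,
        Matrix.diagonal_apply_ne _ hij]
      simp
  rw [this, Matrix.det_diagonal]

lemma my_eigs (t : ℝ) (ht : 0 < t) (ht1 : t < 1) (μ : Fin 5 → ℝ)
    (h : ∏ i, (X - C (μ i)) = (X - C (3+t)) * (X - C (3-t)) * (X + C 2)^3) :
    ∃ k₁ k₂ : Fin 5, k₁ ≠ k₂ ∧ μ k₁ = 3+t ∧ μ k₂ = 3-t ∧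
      ∀ j, j ≠ k₁ → j ≠ k₂ → μ j = -2 := by
  classical
  have hC2 : (X + C 2 : ℝ[X]) = X - C (-2) := by rw [map_neg, sub_neg_eq_add]
  -- roots of LHS
  have hmapprod : ∏ i, (X - C (μ i))
      = ((Finset.univ.val.map μ).map (fun a => X - C a)).prod := by
    rw [Multiset.map_map]
    rfl
  have hrootsL : (∏ i, (X - C (μ i))).roots = Finset.univ.val.map μ := by
    rw [hmapprod, Polynomial.roots_multiset_prod_X_sub_C]
  -- roots of RHS
  have hm1 : ((X : ℝ[X]) - C (3+t)).Monic := monic_X_sub_C _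
  have hm2 : ((X : ℝ[X]) - C (3-t)).Monic := monic_X_sub_C _
  have hm3 : ((X : ℝ[X]) - C (-2)).Monic := monic_X_sub_C _
  have hrootsR : ((X - C (3+t)) * (X - C (3-t)) * (X + C 2)^3 : ℝ[X]).roots
      = (3+t) ::ₘ (3-t) ::ₘ Multiset.replicate 3 (-2 : ℝ) := by
    rw [hC2, Polynomial.roots_mul (mul_ne_zero (mul_ne_zero hm1.ne_zero hm2.ne_zero)
        (pow_ne_zero 3 hm3.ne_zero)),
      Polynomial.roots_mul (mul_ne_zero hm1.ne_zero hm2.ne_zero),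
      Polynomial.roots_pow, Polynomial.roots_X_sub_C, Polynomial.roots_X_sub_C,
      Polynomial.roots_X_sub_C]
    simp [Multiset.replicate_succ]
    rfl
  have hS : Finset.univ.val.map μ = (3+t) ::ₘ (3-t) ::ₘ Multiset.replicate 3 (-2 : ℝ) := by
    rw [← hrootsL, h, hrootsR]
  -- extract k₁
  have hmem1 : (3+t) ∈ Finset.univ.val.map μ := by rw [hS]; exact Multiset.mem_cons_self _ _
  obtain ⟨k₁, -, hk₁⟩ := Multiset.mem_map.1 hmem1
  have hk₁u : k₁ ∈ Finset.univ.val := Finset.mem_univ k₁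
  have hcons1 : μ k₁ ::ₘ (Finset.univ.val.erase k₁).map μ = Finset.univ.val.map μ := by
    rw [← Multiset.map_cons, Multiset.cons_erase hk₁u]
  have hT1 : (Finset.univ.val.erase k₁).map μ = (3-t) ::ₘ Multiset.replicate 3 (-2 : ℝ) := by
    have := hcons1.trans hS
    rw [hk₁] at this
    exact (Multiset.cons_inj_right _).1 this
  have hmem2 : (3-t) ∈ (Finset.univ.val.erase k₁).map μ := by
    rw [hT1]; exact Multiset.mem_cons_self _ _
  obtain ⟨k₂, hk₂e, hk₂⟩ := Multiset.mem_map.1 hmem2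
  have hnd : (Finset.univ.val : Multiset (Fin 5)).Nodup := Finset.univ.nodup
  have hk₂ne : k₂ ≠ k₁ := (hnd.mem_erase_iff.1 hk₂e).1
  have hcons2 : μ k₂ ::ₘ ((Finset.univ.val.erase k₁).erase k₂).map μ
      = (Finset.univ.val.erase k₁).map μ := by
    rw [← Multiset.map_cons, Multiset.cons_erase hk₂e]
  have hT2 : ((Finset.univ.val.erase k₁).erase k₂).map μ = Multiset.replicate 3 (-2 : ℝ) := by
    have := hcons2.trans hT1
    rw [hk₂] at this
    exact (Multiset.cons_inj_right _).1 this
  refine ⟨k₁, k₂, hk₂ne.symm, hk₁, hk₂, ?_⟩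
  intro j hj1 hj2
  have hj : j ∈ (Finset.univ.val.erase k₁).erase k₂ := by
    rw [(hnd.erase k₁).mem_erase_iff]
    refine ⟨hj2, ?_⟩
    rw [hnd.mem_erase_iff]
    exact ⟨hj1, Finset.mem_univ j⟩
  have : μ j ∈ Multiset.replicate 3 (-2 : ℝ) := by
    rw [← hT2]; exact Multiset.mem_map_of_mem μ hj
  exact Multiset.eq_of_mem_replicate this

theorem test_main (t : ℝ) (ht : 0 < t) (ht1 : t < 1)
    (A : Matrix (Fin 5) (Fin 5) ℝ) (hsym : A.IsSymm) (hnn : ∀ i j, 0 ≤ A i j)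
    (hcp : A.charpoly = (X - C (3 + t)) * (X - C (3 - t)) * (X + C 2) ^ 3) :
    False := by
  classical
  have hH : A.IsHermitian := by
    rw [Matrix.IsHermitian, Matrix.conjTranspose_eq_transpose_of_trivial]
    exact hsym
  set μ : Fin 5 → ℝ := hH.eigenvalues with hμ
  set V : Matrix (Fin 5) (Fin 5) ℝ := (hH.eigenvectorUnitary : Matrix (Fin 5) (Fin 5) ℝ) with hV
  have hUmem : V ∈ Matrix.unitaryGroup (Fin 5) ℝ := (hH.eigenvectorUnitary).2
  have hU1 : star V * V = 1 := Matrix.mem_unitaryGroup_iff'.1 hUmem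
  have hU2 : V * star V = 1 := Matrix.mem_unitaryGroup_iff.1 hUmem
  have hdiagmat : star V * A * V = Matrix.diagonal μ := by
    have := hH.conjStarAlgAut_star_eigenvectorUnitary
    rw [Unitary.conjStarAlgAut_star_apply] at this
    refine this.trans ?_
    rw [RCLike.ofReal_real_eq_id, Function.id_comp]
  have hcpd : (Matrix.diagonal μ).charpoly
      = (X - C (3 + t)) * (X - C (3 - t)) * (X + C 2) ^ 3 := by
    rw [← my_charpoly_conj A (Matrix.diagonal μ) V hU1 hdiagmat]
    exact hcp
  have hprod : ∏ i, (X - C (μ i)) = (X - C (3+t)) * (X - C (3-t)) * (X + C 2)^3 := by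
    rw [← my_charpoly_diagonal μ]
    exact hcpd
  obtain ⟨k₁, k₂, hk12, hμ1, hμ2, hμrest⟩ := my_eigs t ht ht1 μ hprod
  have hst : ∀ i j, (star V) i j = V j i := by
    intro i j
    simp [Matrix.star_apply]
  have hentry : ∀ i j, A i j = ∑ k, μ k * (V i k * V j k) := by
    intro i j
    conv_lhs => rw [hH.spectral_theorem, Unitary.conjStarAlgAut_apply]
    rw [Matrix.mul_apply]
    congr 1
    ext k
    rw [Matrix.mul_diagonal]
    simp [hst, hμ, hV]
    ring
  have hcol : ∀ k k', ∑ i, V i k * V i k' = if k = k' then 1 else 0 := by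
    intro k k'
    have h : (star V * V) k k' = (1 : Matrix (Fin 5) (Fin 5) ℝ) k k' := by rw [hU1]
    rw [Matrix.mul_apply, Matrix.one_apply] at h
    simp only [hst] at h
    exact h
  have hsum1 : ∀ i j, ∑ k, V i k * V j k = if i = j then 1 else 0 := by
    intro i j
    have h : (V * star V) i j = (1 : Matrix (Fin 5) (Fin 5) ℝ) i j := by rw [hU2]
    rw [Matrix.mul_apply, Matrix.one_apply] at h
    simp only [hst] at h
    exact h
  have key : ∀ i j, A i j + 2*(if i = j then 1 else 0)
      = (5+t)*(V i k₁*V j k₁) + (5-t)*(V i k₂*V j k₂) := by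
    intro i j
    have e1 : ∑ k, (μ k + 2) * (V i k * V j k)
        = A i j + 2 * (if i = j then 1 else 0) := by
      rw [hentry i j, ← hsum1 i j, Finset.mul_sum, ← Finset.sum_add_distrib]
      congr 1
      ext k
      ring
    have e2 : ∑ k, (μ k + 2) * (V i k * V j k)
        = ∑ k ∈ ({k₁, k₂} : Finset (Fin 5)), (μ k + 2) * (V i k * V j k) := by
      refine (Finset.sum_subset (Finset.subset_univ _) ?_).symm
      intro k _ hk
      simp only [Finset.mem_insert, Finset.mem_singleton, not_or] at hk
      rw [hμrest k hk.1 hk.2]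
      ring
    rw [← e1, e2, Finset.sum_pair hk12, hμ1, hμ2]
    ring
  have htr : ∑ i, A i i = 0 := by
    have e3 : ∑ i, (A i i + 2*(if i = i then 1 else 0))
        = (5+t)*(∑ i, V i k₁ * V i k₁) + (5-t)*(∑ i, V i k₂ * V i k₂) := by
      rw [Finset.mul_sum, Finset.mul_sum, ← Finset.sum_add_distrib]
      exact Finset.sum_congr rfl (fun i _ => key i i)
    rw [hcol k₁ k₁, hcol k₂ k₂, if_pos rfl, if_pos rfl, Finset.sum_add_distrib] at e3
    simp at e3
    linarith
  have hdiag : ∀ i, A i i = 0 := by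
    have hz := (Finset.sum_eq_zero_iff_of_nonneg (fun i _ => hnn i i)).1 htr
    exact fun i => hz i (Finset.mem_univ i)
  -- vectors
  have h5p : (0:ℝ) ≤ 5 + t := by linarith
  have h5m : (0:ℝ) ≤ 5 - t := by linarith
  set x : Fin 5 → ℝ := fun i => Real.sqrt (5+t) * V i k₁ with hxdef
  set y : Fin 5 → ℝ := fun i => Real.sqrt (5-t) * V i k₂ with hydef
  have hxx : ∀ i j, x i * x j = (5+t)*(V i k₁*V j k₁) := by
    intro i j
    simp only [hxdef]
    rw [show Real.sqrt (5+t) * V i k₁ * (Real.sqrt (5+t) * V j k₁)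
      = Real.sqrt (5+t)^2 * (V i k₁*V j k₁) by ring, Real.sq_sqrt h5p]
  have hyy : ∀ i j, y i * y j = (5-t)*(V i k₂*V j k₂) := by
    intro i j
    simp only [hydef]
    rw [show Real.sqrt (5-t) * V i k₂ * (Real.sqrt (5-t) * V j k₂)
      = Real.sqrt (5-t)^2 * (V i k₂*V j k₂) by ring, Real.sq_sqrt h5m]
  have hx2 : ∀ i, (x i)^2 + (y i)^2 = 2 := by
    intro i
    have hk := key i i
    rw [if_pos rfl, hdiag i] at hk
    rw [sq, sq, hxx i i, hyy i i]
    linarith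
  have hdotxy : ∀ i j, 0 ≤ x i * x j + y i * y j := by
    intro i j
    rw [hxx i j, hyy i j, ← key i j]
    have : (0:ℝ) ≤ 2*(if i = j then 1 else 0) := by positivity
    linarith [hnn i j]
  have hsx : ∑ i, (x i)^2 = 5 + t := by
    have e : ∀ i ∈ Finset.univ, (x i)^2 = (5+t)*(V i k₁ * V i k₁) :=
      fun i _ => by rw [sq]; exact hxx i i
    rw [Finset.sum_congr rfl e, ← Finset.mul_sum, hcol k₁ k₁, if_pos rfl, mul_one]
  have hsy : ∑ i, (y i)^2 = 5 - t := by
    have e : ∀ i ∈ Finset.univ, (y i)^2 = (5-t)*(V i k₂ * V i k₂) :=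
      fun i _ => by rw [sq]; exact hyy i i
    rw [Finset.sum_congr rfl e, ← Finset.mul_sum, hcol k₂ k₂, if_pos rfl, mul_one]
  have hsxy : ∑ i, x i * y i = 0 := by
    have e : ∀ i ∈ Finset.univ, x i * y i
        = (Real.sqrt (5+t) * Real.sqrt (5-t)) * (V i k₁ * V i k₂) :=
      fun i _ => by simp only [hxdef, hydef]; ring
    rw [Finset.sum_congr rfl e, ← Finset.mul_sum, hcol k₁ k₂, if_neg hk12, mul_zero]
  have hcore := my_core x y hx2 hdotxy
  have hs1 : ∑ i, ((x i)^2 - (y i)^2) = 2*t := by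
    rw [Finset.sum_sub_distrib, hsx, hsy]
    ring
  have hs2 : ∑ i, 2 * x i * y i = 0 := by
    have e : ∀ i ∈ Finset.univ, 2 * x i * y i = 2*(x i * y i) := fun i _ => by ring
    rw [Finset.sum_congr rfl e, ← Finset.mul_sum, hsxy, mul_zero]
  rw [hs1, hs2] at hcore
  clear * - hcore ht ht1
  nlinarith

theorem symmetric_realizable_hat_sigma_implies_t_ge_one (t : ℝ) (ht : 0 < t)
    (h : ∃ A : Matrix (Fin 5) (Fin 5) ℝ,
        A.IsSymm ∧ (∀ i j, 0 ≤ A i j) ∧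
        A.charpoly = (X - C (3 + t)) * (X - C (3 - t)) * (X + C 2) ^ 3) :
    1 ≤ t := by
  by_contra hlt
  push_neg at hlt
  obtain ⟨A, hsym, hnn, hcp⟩ := h
  exact test_main t ht hlt A hsym hnn hcp
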